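/- Let s ≥ 1 be a real number. There exists a constant C > 0 such that for all functions f1, f2, f3 : ℤ → [0,∞), ( Σ_{k∈ℤ} ⟨k⟩^{2s} ( Σ_{k1-k2+k3=k} ⟨k⟩^{-1} ⟨max(|k1|,|k2|,|k3|)⟩^{-1} f1(k1) f2(k2) f3(k3) )^2 )^{1/2} ≤ C · ‖⟨·⟩^{s-2} f3‖_{l^2} · ‖⟨·⟩^s f1‖_{l^2} · ‖⟨·⟩^s f2‖_{l^2}, where ⟨k⟩ = (1+k^2)^{1/2} (and all norms are allowed to be infinite). -/

import Mathlib

open scoped ENNReal NNReal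

/-- The Japanese bracket `⟨k⟩ = (1+k^2)^{1/2}`. -/
noncomputable def jb (k : ℤ) : ℝ := Real.sqrt (1 + (k : ℝ) ^ 2)

lemma jb_pos (k : ℤ) : 0 < jb k := Real.sqrt_pos.mpr (by positivity)

lemma one_le_jb (k : ℤ) : 1 ≤ jb k := by
  rw [show (1:ℝ) = Real.sqrt 1 by simp]
  exact Real.sqrt_le_sqrt (by nlinarith [sq_nonneg ((k:ℝ))])

lemma jb_mul_self (k : ℤ) : jb k * jb k = 1 + (k : ℝ) ^ 2 :=
  Real.mul_self_sqrt (by positivity)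

lemma jb_abs (k : ℤ) : jb |k| = jb k := by
  unfold jb; congr 2; push_cast; rw [sq_abs]

lemma jb_mono {i j : ℤ} (hi : 0 ≤ i) (hij : i ≤ j) : jb i ≤ jb j := by
  apply Real.sqrt_le_sqrt
  have h1 : (i:ℝ) ≤ (j:ℝ) := by exact_mod_cast hij
  have h2 : (0:ℝ) ≤ (i:ℝ) := by exact_mod_cast hi
  nlinarith

-- m = max of abs values
lemma jb_c_le_m (k p1 p2 : ℤ) :
    jb (k - p1 + p2) ≤ jb (max (max |p1| |p2|) |k - p1 + p2|) := by
  rw [← jb_abs (k - p1 + p2)]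
  exact jb_mono (abs_nonneg _) (le_max_right _ _)

lemma jb_m_le_abc (k p1 p2 : ℤ) :
    jb (max (max |p1| |p2|) |k - p1 + p2|) ≤ jb p1 * jb p2 * jb (k - p1 + p2) := by
  have h1 := one_le_jb p1
  have h2 := one_le_jb p2
  have h3 := one_le_jb (k - p1 + p2)
  have h12 : 1 * 1 ≤ jb p2 * jb (k - p1 + p2) :=
    mul_le_mul h2 h3 zero_le_one (by linarith)
  have h13 : 1 * 1 ≤ jb p1 * jb (k - p1 + p2) :=
    mul_le_mul h1 h3 zero_le_one (by linarith)
  have h14 : 1 * 1 ≤ jb p1 * jb p2 :=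
    mul_le_mul h1 h2 zero_le_one (by linarith)
  rcases max_choice (max |p1| |p2|) |k - p1 + p2| with h | h <;> rw [h]
  · rcases max_choice |p1| |p2| with h' | h' <;> rw [h', jb_abs] <;> nlinarith
  · rw [jb_abs]; nlinarith

lemma jb_k_le (k p1 p2 : ℤ) :
    jb k ≤ 3 * jb (max (max |p1| |p2|) |k - p1 + p2|) := by
  set m := max (max |p1| |p2|) |k - p1 + p2| with hm
  have hm0 : 0 ≤ m := le_trans (abs_nonneg p1) (le_trans (le_max_left _ _) (le_max_left _ _))
  have habs : |k| ≤ 3 * m := by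
    have h1 : |p1| ≤ m := le_trans (le_max_left _ _) (le_max_left _ _)
    have h2 : |p2| ≤ m := le_trans (le_max_right _ _) (le_max_left _ _)
    have h3 : |k - p1 + p2| ≤ m := le_max_right _ _
    have : |k| ≤ |p1| + |p2| + |k - p1 + p2| := by
      calc |k| = |p1 - p2 + (k - p1 + p2)| := by ring_nf
      _ ≤ |p1 - p2| + |k - p1 + p2| := abs_add_le _ _
      _ ≤ |p1| + |p2| + |k - p1 + p2| := by have := abs_sub p1 p2; linarith
    linarith
  have hk2 : (k:ℝ)^2 ≤ 9 * (m:ℝ)^2 := by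
    have : |(k:ℝ)| ≤ 3 * (m:ℝ) := by
      rw [← Int.cast_abs]
      exact_mod_cast habs
    nlinarith [abs_nonneg (k:ℝ), sq_abs (k:ℝ)]
  calc jb k ≤ Real.sqrt (9 * (1 + (m:ℝ)^2)) := Real.sqrt_le_sqrt (by nlinarith)
  _ = 3 * jb m := by
      rw [show (9:ℝ) * (1 + (m:ℝ)^2) = 3^2 * (1 + (m:ℝ)^2) by norm_num,
        Real.sqrt_mul (by positivity), Real.sqrt_sq (by norm_num)]
      rfl

lemma key' {s x a b c μ : ℝ} (hs : 1 ≤ s) (ha : 1 ≤ a) (hb : 1 ≤ b) (hc : 1 ≤ c)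
    (hx1 : 1 ≤ x) (hcμ : c ≤ μ) (hμ : μ ≤ a * b * c) (hx : x ≤ 3 * μ) :
    x ^ s * (x⁻¹ * μ⁻¹) ≤ 3 ^ (s - 1) * (a⁻¹ * b⁻¹) * (a ^ s * (b ^ s * c ^ (s - 2))) := by
  have hμ1 : 1 ≤ μ := hc.trans hcμ
  have h1 : x ^ s * x⁻¹ = x ^ (s - 1) := by
    rw [Real.rpow_sub (by linarith), Real.rpow_one]; ring
  have h2 : 3 ^ (s - 1) * (a⁻¹ * b⁻¹) * (a ^ s * (b ^ s * c ^ (s - 2)))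
      = 3 ^ (s - 1) * (a ^ (s - 1) * (b ^ (s - 1) * c ^ (s - 2))) := by
    rw [Real.rpow_sub (by linarith : (0:ℝ) < a), Real.rpow_sub (by linarith : (0:ℝ) < b),
      Real.rpow_one, Real.rpow_one]
    field_simp
  rw [← mul_assoc, h1, h2]
  have hx' : x ^ (s - 1) ≤ 3 ^ (s - 1) * μ ^ (s - 1) := by
    rw [← Real.mul_rpow (by norm_num) (by linarith)]
    exact Real.rpow_le_rpow (by linarith) hx (by linarith)
  have hμ2 : μ ^ (s - 1) * μ⁻¹ = μ ^ (s - 2) := by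
    rw [← Real.rpow_neg_one μ, ← Real.rpow_add (by linarith : (0:ℝ) < μ)]
    ring_nf
  have hstep2 : μ ^ (s - 2) ≤ a ^ (s - 1) * (b ^ (s - 1) * c ^ (s - 2)) := by
    rcases le_total s 2 with h | h
    · have h3 : μ ^ (s - 2) ≤ c ^ (s - 2) :=
        Real.rpow_le_rpow_of_nonpos (by linarith) hcμ (by linarith)
      have h4 : 1 ≤ a ^ (s - 1) := Real.one_le_rpow ha (by linarith)
      have h5 : 1 ≤ b ^ (s - 1) := Real.one_le_rpow hb (by linarith)
      have h6 : 0 ≤ c ^ (s - 2) := Real.rpow_nonneg (by linarith) _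
      calc μ ^ (s - 2) ≤ c ^ (s - 2) := h3
        _ = 1 * (1 * c ^ (s - 2)) := by ring
        _ ≤ a ^ (s - 1) * (b ^ (s - 1) * c ^ (s - 2)) :=
          mul_le_mul h4 (mul_le_mul h5 le_rfl h6 (by linarith)) (by positivity) (by linarith)
    · have h3 : μ ^ (s - 2) ≤ (a * b * c) ^ (s - 2) :=
        Real.rpow_le_rpow (by linarith) hμ (by linarith)
      have h4 : (a * b * c) ^ (s - 2) = a ^ (s - 2) * b ^ (s - 2) * c ^ (s - 2) := by
        rw [Real.mul_rpow (by positivity) (by linarith), Real.mul_rpow (by linarith) (by linarith)]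
      have h5 : a ^ (s - 2) ≤ a ^ (s - 1) := Real.rpow_le_rpow_of_exponent_le ha (by linarith)
      have h6 : b ^ (s - 2) ≤ b ^ (s - 1) := Real.rpow_le_rpow_of_exponent_le hb (by linarith)
      have h7 : 0 ≤ c ^ (s - 2) := Real.rpow_nonneg (by linarith) _
      have h8 : 0 ≤ a ^ (s - 2) := Real.rpow_nonneg (by linarith) _
      have h9 : 0 ≤ b ^ (s - 1) := Real.rpow_nonneg (by linarith) _
      calc μ ^ (s - 2) ≤ a ^ (s - 2) * b ^ (s - 2) * c ^ (s - 2) := h4 ▸ h3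
        _ = a ^ (s - 2) * (b ^ (s - 2) * c ^ (s - 2)) := by ring
        _ ≤ a ^ (s - 1) * (b ^ (s - 1) * c ^ (s - 2)) :=
          mul_le_mul h5 (mul_le_mul h6 le_rfl h7 h9) (by positivity) (by linarith)
  have hμinv : 0 ≤ μ⁻¹ := by positivity
  have h30 : (0:ℝ) ≤ 3 ^ (s - 1) := Real.rpow_nonneg (by norm_num) _
  calc x ^ (s - 1) * μ⁻¹ ≤ 3 ^ (s - 1) * μ ^ (s - 1) * μ⁻¹ := by
        exact mul_le_mul_of_nonneg_right hx' hμinv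
    _ = 3 ^ (s - 1) * μ ^ (s - 2) := by rw [mul_assoc, hμ2]
    _ ≤ _ := by
        apply mul_le_mul_of_nonneg_left hstep2 h30

lemma tsum_cauchy_schwarz (f g : ℤ × ℤ → ℝ≥0∞) :
    ∑' p, f p * g p ≤ (∑' p, f p ^ 2) ^ ((1:ℝ)/2) * (∑' p, g p ^ 2) ^ ((1:ℝ)/2) := by
  have hpq : Real.HolderConjugate 2 2 := Real.holderConjugate_iff.mpr ⟨one_lt_two, by norm_num⟩
  have h := ENNReal.lintegral_mul_le_Lp_mul_Lq (MeasureTheory.Measure.count (α := ℤ × ℤ)) hpq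
    (measurable_of_countable f).aemeasurable (measurable_of_countable g).aemeasurable
  simp only [Pi.mul_apply, MeasureTheory.lintegral_count] at h
  have h2 : ∀ u : ℝ≥0∞, u ^ (2:ℝ) = u ^ (2:ℕ) := by
    intro u; rw [← ENNReal.rpow_natCast u 2]; norm_num
  simp only [h2] at h
  exact h

lemma summable_aux : Summable (fun n : ℕ => (1 + (n:ℝ)^2)⁻¹) := by
  have h0 : Summable (fun n : ℕ => 1 / ((n:ℝ))^2) :=
    Real.summable_one_div_nat_pow.mpr one_lt_two
  have h1 : Summable (fun n : ℕ => 1 / (((n + 1 : ℕ)):ℝ)^2) :=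
    (summable_nat_add_iff (f := fun n : ℕ => 1 / ((n:ℝ))^2) 1).mpr h0
  have h2 : Summable (fun n : ℕ => 2 * (1 / ((n:ℝ) + 1)^2)) := by
    apply Summable.mul_left
    convert h1 using 2 with n
    · rfl
    push_cast
    ring
  apply Summable.of_nonneg_of_le (fun n => by positivity) (fun n => ?_) h2
  have hb : (0:ℝ) < ((n:ℝ) + 1)^2 := by positivity
  have ha : (0:ℝ) < 1 + (n:ℝ)^2 := by positivity
  rw [inv_eq_one_div, mul_one_div, div_le_div_iff₀ ha hb]
  nlinarith [sq_nonneg ((n:ℝ) - 1)]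

lemma summable_int_inv : Summable (fun n : ℤ => (1 + (n:ℝ)^2)⁻¹) := by
  apply Summable.of_nat_of_neg
  · exact_mod_cast summable_aux
  · have : ∀ n : ℕ, (1 + ((-(n:ℤ) : ℤ):ℝ)^2)⁻¹ = (1 + (n:ℝ)^2)⁻¹ := by
      intro n; push_cast; rw [neg_sq]
    rw [funext this]
    exact summable_aux

lemma ofReal_jb_two_mul (t : ℝ) (n : ℤ) :
    ENNReal.ofReal (jb n ^ (2 * t)) = ENNReal.ofReal (jb n ^ t) ^ 2 := by
  rw [two_mul, Real.rpow_add (jb_pos n),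
    ENNReal.ofReal_mul (Real.rpow_nonneg (jb_pos n).le _), sq]

/-- The `l^2_s` norm `‖⟨·⟩^s f‖_{l^2}`, valued in `ℝ≥0∞` (possibly infinite). -/
noncomputable def sobNorm (s : ℝ) (f : ℤ → ℝ≥0) : ℝ≥0∞ :=
  (∑' k : ℤ, ENNReal.ofReal (jb k ^ (2 * s)) * (f k : ℝ≥0∞) ^ 2) ^ ((1 : ℝ) / 2)

theorem stmt_15 (s : ℝ) (hs : 1 ≤ s) :
    ∃ C : ℝ, 0 < C ∧ ∀ f1 f2 f3 : ℤ → ℝ≥0,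
      (∑' k : ℤ, ENNReal.ofReal (jb k ^ (2 * s)) *
          (∑' p : ℤ × ℤ,
              ENNReal.ofReal ((jb k)⁻¹ * (jb (max (max |p.1| |p.2|) |k - p.1 + p.2|))⁻¹) *
                (f1 p.1 : ℝ≥0∞) * (f2 p.2 : ℝ≥0∞) * (f3 (k - p.1 + p.2) : ℝ≥0∞)) ^ 2) ^
            ((1 : ℝ) / 2)
        ≤ ENNReal.ofReal C * (sobNorm (s - 2) f3 * (sobNorm s f1 * sobNorm s f2)) := by
  have hsum := summable_int_inv
  set T : ℝ≥0∞ := ∑' n : ℤ, ENNReal.ofReal ((1 + (n:ℝ)^2)⁻¹) with hTdef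
  have hT : T ≠ ⊤ := by
    rw [hTdef, ← ENNReal.ofReal_tsum_of_nonneg (fun n => by positivity) hsum]
    exact ENNReal.ofReal_ne_top
  have h3pos : (0:ℝ) < 3 ^ (s - 1) := Real.rpow_pos_of_pos (by norm_num) _
  have hTR : (0:ℝ) ≤ T.toReal := ENNReal.toReal_nonneg
  refine ⟨3 ^ (s - 1) * T.toReal + 1, by positivity, fun f1 f2 f3 => ?_⟩
  set c : ℝ≥0∞ := ENNReal.ofReal ((3:ℝ) ^ (s - 1)) with hcdef
  set g1 : ℤ → ℝ≥0∞ := fun n => ENNReal.ofReal (jb n ^ s) * (f1 n : ℝ≥0∞) with hg1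
  set g2 : ℤ → ℝ≥0∞ := fun n => ENNReal.ofReal (jb n ^ s) * (f2 n : ℝ≥0∞) with hg2
  set g3 : ℤ → ℝ≥0∞ := fun n => ENNReal.ofReal (jb n ^ (s - 2)) * (f3 n : ℝ≥0∞) with hg3
  set M : ℤ × ℤ → ℝ≥0∞ := fun p => c * ENNReal.ofReal ((jb p.1)⁻¹ * (jb p.2)⁻¹) with hM
  set G : ℤ → ℤ × ℤ → ℝ≥0∞ := fun k p => g1 p.1 * (g2 p.2 * g3 (k - p.1 + p.2)) with hG
  -- Step A : pointwise bound on the summand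
  have stepA : ∀ (k : ℤ) (p : ℤ × ℤ),
      ENNReal.ofReal (jb k ^ s) *
        (ENNReal.ofReal ((jb k)⁻¹ * (jb (max (max |p.1| |p.2|) |k - p.1 + p.2|))⁻¹) *
          (f1 p.1 : ℝ≥0∞) * (f2 p.2 : ℝ≥0∞) * (f3 (k - p.1 + p.2) : ℝ≥0∞))
      ≤ M p * G k p := by
    intro k p
    have hkey : jb k ^ s * ((jb k)⁻¹ * (jb (max (max |p.1| |p.2|) |k - p.1 + p.2|))⁻¹)
        ≤ 3 ^ (s - 1) * ((jb p.1)⁻¹ * (jb p.2)⁻¹) *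
          (jb p.1 ^ s * (jb p.2 ^ s * jb (k - p.1 + p.2) ^ (s - 2))) :=
      key' hs (one_le_jb _) (one_le_jb _) (one_le_jb _) (one_le_jb _)
        (jb_c_le_m k p.1 p.2) (jb_m_le_abc k p.1 p.2) (jb_k_le k p.1 p.2)
    have hnn1 : (0:ℝ) ≤ (jb p.1)⁻¹ * (jb p.2)⁻¹ :=
      mul_nonneg (inv_nonneg.mpr (jb_pos _).le) (inv_nonneg.mpr (jb_pos _).le)
    calc ENNReal.ofReal (jb k ^ s) *
        (ENNReal.ofReal ((jb k)⁻¹ * (jb (max (max |p.1| |p.2|) |k - p.1 + p.2|))⁻¹) *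
          (f1 p.1 : ℝ≥0∞) * (f2 p.2 : ℝ≥0∞) * (f3 (k - p.1 + p.2) : ℝ≥0∞))
        = ENNReal.ofReal (jb k ^ s *
            ((jb k)⁻¹ * (jb (max (max |p.1| |p.2|) |k - p.1 + p.2|))⁻¹)) *
            ((f1 p.1 : ℝ≥0∞) * ((f2 p.2 : ℝ≥0∞) * (f3 (k - p.1 + p.2) : ℝ≥0∞))) := by
          rw [ENNReal.ofReal_mul (Real.rpow_nonneg (jb_pos k).le _)]
          ring
      _ ≤ ENNReal.ofReal (3 ^ (s - 1) * ((jb p.1)⁻¹ * (jb p.2)⁻¹) *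
            (jb p.1 ^ s * (jb p.2 ^ s * jb (k - p.1 + p.2) ^ (s - 2)))) *
            ((f1 p.1 : ℝ≥0∞) * ((f2 p.2 : ℝ≥0∞) * (f3 (k - p.1 + p.2) : ℝ≥0∞))) :=
          mul_le_mul_left (ENNReal.ofReal_le_ofReal hkey) _
      _ = M p * G k p := by
          rw [ENNReal.ofReal_mul (mul_nonneg h3pos.le hnn1),
            ENNReal.ofReal_mul h3pos.le,
            ENNReal.ofReal_mul (Real.rpow_nonneg (jb_pos p.1).le _),
            ENNReal.ofReal_mul (Real.rpow_nonneg (jb_pos p.2).le _)]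
          simp only [hM, hG, hg1, hg2, hg3, hcdef]
          ring
  -- Step B : Cauchy-Schwarz
  have stepB : ∀ k : ℤ, (∑' p : ℤ × ℤ, M p * G k p) ^ 2
      ≤ (∑' p : ℤ × ℤ, M p ^ 2) * (∑' p : ℤ × ℤ, G k p ^ 2) := by
    intro k
    have h := tsum_cauchy_schwarz M (G k)
    calc (∑' p : ℤ × ℤ, M p * G k p) ^ 2
        ≤ ((∑' p : ℤ × ℤ, M p ^ 2) ^ ((1:ℝ)/2) * (∑' p : ℤ × ℤ, G k p ^ 2) ^ ((1:ℝ)/2)) ^ 2 :=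
          pow_le_pow_left₀ (zero_le') h 2
      _ = (∑' p : ℤ × ℤ, M p ^ 2) * (∑' p : ℤ × ℤ, G k p ^ 2) := by
          rw [mul_pow, ← ENNReal.rpow_natCast ((∑' p : ℤ × ℤ, M p ^ 2) ^ ((1:ℝ)/2)) 2,
            ← ENNReal.rpow_natCast ((∑' p : ℤ × ℤ, G k p ^ 2) ^ ((1:ℝ)/2)) 2,
            ← ENNReal.rpow_mul, ← ENNReal.rpow_mul]
          norm_num
  -- Step C : the sum of M^2
  have hMsq : ∀ p : ℤ × ℤ, M p ^ 2
      = c ^ 2 * (ENNReal.ofReal ((1 + (p.1:ℝ)^2)⁻¹) * ENNReal.ofReal ((1 + (p.2:ℝ)^2)⁻¹)) := by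
    intro p
    have hnn1 : (0:ℝ) ≤ (jb p.1)⁻¹ * (jb p.2)⁻¹ :=
      mul_nonneg (inv_nonneg.mpr (jb_pos _).le) (inv_nonneg.mpr (jb_pos _).le)
    have e1 : ENNReal.ofReal ((jb p.1)⁻¹ * (jb p.2)⁻¹) ^ 2
        = ENNReal.ofReal ((1 + (p.1:ℝ)^2)⁻¹) * ENNReal.ofReal ((1 + (p.2:ℝ)^2)⁻¹) := by
      rw [sq, ← ENNReal.ofReal_mul hnn1,
        show ((jb p.1)⁻¹ * (jb p.2)⁻¹) * ((jb p.1)⁻¹ * (jb p.2)⁻¹)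
          = (1 + (p.1:ℝ)^2)⁻¹ * (1 + (p.2:ℝ)^2)⁻¹ by
            rw [← jb_mul_self p.1, ← jb_mul_self p.2, mul_inv, mul_inv]; ring,
        ENNReal.ofReal_mul (by positivity)]
    rw [hM, mul_pow, e1]
  have stepC : (∑' p : ℤ × ℤ, M p ^ 2) = c ^ 2 * (T * T) := by
    rw [tsum_congr hMsq, ENNReal.tsum_mul_left]
    congr 1
    rw [ENNReal.tsum_prod']
    calc ∑' (a : ℤ) (b : ℤ),
          ENNReal.ofReal ((1 + (a:ℝ)^2)⁻¹) * ENNReal.ofReal ((1 + (b:ℝ)^2)⁻¹)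
        = ∑' a : ℤ, ENNReal.ofReal ((1 + (a:ℝ)^2)⁻¹) * T :=
          tsum_congr fun a => ENNReal.tsum_mul_left
      _ = T * T := ENNReal.tsum_mul_right
  -- Step D : the sum of G^2
  have stepD : (∑' k : ℤ, ∑' p : ℤ × ℤ, G k p ^ 2)
      = (∑' n : ℤ, g3 n ^ 2) * ((∑' n : ℤ, g1 n ^ 2) * (∑' n : ℤ, g2 n ^ 2)) := by
    rw [ENNReal.tsum_comm]
    have h1 : ∀ p : ℤ × ℤ, (∑' k : ℤ, G k p ^ 2)
        = (g1 p.1 ^ 2 * g2 p.2 ^ 2) * ∑' n : ℤ, g3 n ^ 2 := by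
      intro p
      have e : ∀ k : ℤ, G k p ^ 2
          = (g1 p.1 ^ 2 * g2 p.2 ^ 2) *
            ((fun n => g3 n ^ 2) ((Equiv.subRight (p.1 - p.2)) k)) := by
        intro k
        simp only [hG, Equiv.subRight_apply]
        rw [show k - (p.1 - p.2) = k - p.1 + p.2 by ring]
        ring
      rw [tsum_congr e, ENNReal.tsum_mul_left,
        (Equiv.subRight (p.1 - p.2)).tsum_eq (fun n => g3 n ^ 2)]
    rw [tsum_congr h1, ENNReal.tsum_mul_right, mul_comm]
    congr 1
    rw [ENNReal.tsum_prod']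
    calc ∑' (a : ℤ) (b : ℤ), g1 a ^ 2 * g2 b ^ 2
        = ∑' a : ℤ, g1 a ^ 2 * ∑' n : ℤ, g2 n ^ 2 :=
          tsum_congr fun a => ENNReal.tsum_mul_left
      _ = _ := ENNReal.tsum_mul_right
  -- per-k bound
  have hk : ∀ k : ℤ, ENNReal.ofReal (jb k ^ (2 * s)) *
      (∑' p : ℤ × ℤ,
          ENNReal.ofReal ((jb k)⁻¹ * (jb (max (max |p.1| |p.2|) |k - p.1 + p.2|))⁻¹) *
            (f1 p.1 : ℝ≥0∞) * (f2 p.2 : ℝ≥0∞) * (f3 (k - p.1 + p.2) : ℝ≥0∞)) ^ 2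
      ≤ (c ^ 2 * (T * T)) * ∑' p : ℤ × ℤ, G k p ^ 2 := by
    intro k
    rw [ofReal_jb_two_mul s k, ← mul_pow, ← ENNReal.tsum_mul_left]
    calc (∑' p : ℤ × ℤ, ENNReal.ofReal (jb k ^ s) *
          (ENNReal.ofReal ((jb k)⁻¹ * (jb (max (max |p.1| |p.2|) |k - p.1 + p.2|))⁻¹) *
            (f1 p.1 : ℝ≥0∞) * (f2 p.2 : ℝ≥0∞) * (f3 (k - p.1 + p.2) : ℝ≥0∞))) ^ 2
        ≤ (∑' p : ℤ × ℤ, M p * G k p) ^ 2 :=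
          pow_le_pow_left₀ (zero_le') (ENNReal.tsum_le_tsum (stepA k)) 2
      _ ≤ (∑' p : ℤ × ℤ, M p ^ 2) * (∑' p : ℤ × ℤ, G k p ^ 2) := stepB k
      _ = (c ^ 2 * (T * T)) * ∑' p : ℤ × ℤ, G k p ^ 2 := by rw [stepC]
  -- sum over k
  have main2 : (∑' k : ℤ, ENNReal.ofReal (jb k ^ (2 * s)) *
      (∑' p : ℤ × ℤ,
          ENNReal.ofReal ((jb k)⁻¹ * (jb (max (max |p.1| |p.2|) |k - p.1 + p.2|))⁻¹) *
            (f1 p.1 : ℝ≥0∞) * (f2 p.2 : ℝ≥0∞) * (f3 (k - p.1 + p.2) : ℝ≥0∞)) ^ 2)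
      ≤ (c * T) ^ 2 * ((∑' n : ℤ, g3 n ^ 2) * ((∑' n : ℤ, g1 n ^ 2) * (∑' n : ℤ, g2 n ^ 2))) := by
    calc _ ≤ ∑' k : ℤ, (c ^ 2 * (T * T)) * ∑' p : ℤ × ℤ, G k p ^ 2 := ENNReal.tsum_le_tsum hk
      _ = (c ^ 2 * (T * T)) * ∑' k : ℤ, ∑' p : ℤ × ℤ, G k p ^ 2 := ENNReal.tsum_mul_left
      _ = _ := by rw [stepD]; ring
  -- identify sobNorms
  have hN1 : sobNorm s f1 = (∑' n : ℤ, g1 n ^ 2) ^ ((1:ℝ)/2) := by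
    unfold sobNorm
    congr 1
    exact tsum_congr fun n => by simp only [hg1]; rw [ofReal_jb_two_mul, mul_pow]
  have hN2 : sobNorm s f2 = (∑' n : ℤ, g2 n ^ 2) ^ ((1:ℝ)/2) := by
    unfold sobNorm
    congr 1
    exact tsum_congr fun n => by simp only [hg2]; rw [ofReal_jb_two_mul, mul_pow]
  have hN3 : sobNorm (s - 2) f3 = (∑' n : ℤ, g3 n ^ 2) ^ ((1:ℝ)/2) := by
    unfold sobNorm
    congr 1
    exact tsum_congr fun n => by simp only [hg3]; rw [ofReal_jb_two_mul, mul_pow]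
  calc _ ≤ ((c * T) ^ 2 * ((∑' n : ℤ, g3 n ^ 2) *
        ((∑' n : ℤ, g1 n ^ 2) * (∑' n : ℤ, g2 n ^ 2)))) ^ ((1:ℝ)/2) :=
        ENNReal.rpow_le_rpow main2 (by norm_num)
    _ = (c * T) * ((∑' n : ℤ, g3 n ^ 2) ^ ((1:ℝ)/2) *
        ((∑' n : ℤ, g1 n ^ 2) ^ ((1:ℝ)/2) * (∑' n : ℤ, g2 n ^ 2) ^ ((1:ℝ)/2))) := by
        rw [ENNReal.mul_rpow_of_nonneg _ _ (by norm_num : (0:ℝ) ≤ 1/2),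
          ENNReal.mul_rpow_of_nonneg _ _ (by norm_num : (0:ℝ) ≤ 1/2),
          ENNReal.mul_rpow_of_nonneg _ _ (by norm_num : (0:ℝ) ≤ 1/2)]
        congr 1
        rw [← ENNReal.rpow_natCast (c * T) 2, ← ENNReal.rpow_mul]
        norm_num
    _ ≤ ENNReal.ofReal (3 ^ (s - 1) * T.toReal + 1) *
        (sobNorm (s - 2) f3 * (sobNorm s f1 * sobNorm s f2)) := by
        rw [hN1, hN2, hN3]
        apply mul_le_mul_left
        calc c * T = ENNReal.ofReal ((3:ℝ) ^ (s - 1)) * ENNReal.ofReal T.toReal := by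
              rw [ENNReal.ofReal_toReal hT]
          _ = ENNReal.ofReal ((3:ℝ) ^ (s - 1) * T.toReal) := (ENNReal.ofReal_mul h3pos.le).symm
          _ ≤ _ := ENNReal.ofReal_le_ofReal (by linarith)
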